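/- Let H₀ be a complex Hilbert space, B ∈ B(H₀) with 0 ≤ B ≤ I and ker B = ker(I−B) = {0}, H = H₀ ⊕ H₀, N = {(u, Bu) : u ∈ H₀} and M = {(u, −Bu) : u ∈ H₀}. Then for every T ∈ B(H) with ‖T‖ ≤ 1, TN ⊆ N and TM ⊆ M, and for all x₁, y₂ ∈ H₀, one has |⟨T(x₁, 0), (0, y₂)⟩| ≤ ‖Bx₁‖·‖By₂‖. -/

import Mathlib

noncomputable section

variable {H₀ : Type*} [NormedAddCommGroup H₀] [InnerProductSpace ℂ H₀] [CompleteSpace H₀]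

/-- The vector `(u, v) ∈ H₀ ⊕ H₀`. -/
def vec₂ (u v : H₀) : WithLp 2 (H₀ × H₀) := (WithLp.equiv 2 (H₀ × H₀)).symm (u, v)

/-- The subspace `N = {(u, Bu) : u ∈ H₀}` of `H₀ ⊕ H₀`. -/
def graphN (B : H₀ →L[ℂ] H₀) : Set (WithLp 2 (H₀ × H₀)) :=
  {p | (WithLp.equiv 2 (H₀ × H₀) p).2 = B (WithLp.equiv 2 (H₀ × H₀) p).1}

/-- The subspace `M = {(u, −Bu) : u ∈ H₀}` of `H₀ ⊕ H₀`. -/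
def graphM (B : H₀ →L[ℂ] H₀) : Set (WithLp 2 (H₀ × H₀)) :=
  {p | (WithLp.equiv 2 (H₀ × H₀) p).2 = -(B (WithLp.equiv 2 (H₀ × H₀) p).1)}

/-- Let `B` be a positive contraction on `H₀` with
`ker B = ker (I−B) = {0}` and let `N = {(u, Bu)}`, `M = {(u, −Bu)}` in `H = H₀ ⊕ H₀`.
Then every contraction `T` on `H` leaving `N` and `M` invariant satisfies
`|⟨T(x₁, 0), (0, y₂)⟩| ≤ ‖Bx₁‖ · ‖By₂‖` for all `x₁, y₂ ∈ H₀`. -/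
theorem norms_of_vector_functionals_stmt19
    (B : H₀ →L[ℂ] H₀) (hBpos : B.IsPositive) (hB1 : ((1 : H₀ →L[ℂ] H₀) - B).IsPositive)
    (hkerB : LinearMap.ker (B : H₀ →ₗ[ℂ] H₀) = ⊥) (hker1B : LinearMap.ker (((1 : H₀ →L[ℂ] H₀) - B : H₀ →L[ℂ] H₀) : H₀ →ₗ[ℂ] H₀) = ⊥)
    (T : WithLp 2 (H₀ × H₀) →L[ℂ] WithLp 2 (H₀ × H₀)) (hT : ‖T‖ ≤ 1)
    (hTN : Set.MapsTo T (graphN B) (graphN B)) (hTM : Set.MapsTo T (graphM B) (graphM B))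
    (x₁ y₂ : H₀) :
    ‖(inner ℂ (T (vec₂ x₁ 0)) (vec₂ 0 y₂) : ℂ)‖ ≤ ‖B x₁‖ * ‖B y₂‖ := by
  set p := vec₂ x₁ (B x₁) with hp_def
  set q := vec₂ x₁ (-(B x₁)) with hq_def
  have hp : p ∈ graphN B := rfl
  have hq : q ∈ graphM B := rfl
  have hNp : (T p).snd = B ((T p).fst) := hTN hp
  have hMq : (T q).snd = -B ((T q).fst) := hTM hq
  -- algebraic decompositions
  have h1 : vec₂ x₁ 0 = (2⁻¹ : ℂ) • (p + q) := by
    apply (WithLp.equiv 2 (H₀ × H₀)).injective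
    apply Prod.ext
    · show x₁ = (2⁻¹ : ℂ) • (x₁ + x₁)
      rw [smul_add]
      module
    · show (0 : H₀) = (2⁻¹ : ℂ) • (B x₁ + -(B x₁))
      simp
  have h2 : vec₂ 0 (B x₁) = (2⁻¹ : ℂ) • (p - q) := by
    apply (WithLp.equiv 2 (H₀ × H₀)).injective
    apply Prod.ext
    · show (0 : H₀) = (2⁻¹ : ℂ) • (x₁ - x₁)
      simp
    · show B x₁ = (2⁻¹ : ℂ) • (B x₁ - -(B x₁))
      rw [sub_neg_eq_add, smul_add]
      module
  set w : H₀ := (2⁻¹ : ℂ) • ((T p).fst - (T q).fst) with hw_def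
  have hw1 : (T (vec₂ 0 (B x₁))).fst = w := by
    rw [h2, map_smul, map_sub]
    rfl
  have hT2 : (T (vec₂ x₁ 0)).snd = B w := by
    rw [h1, map_smul, map_add]
    show (2⁻¹ : ℂ) • ((T p).snd + (T q).snd) = B w
    rw [hNp, hMq, hw_def, map_smul, map_sub]
    module
  -- the inner product
  have hinner : (inner ℂ (T (vec₂ x₁ 0)) (vec₂ 0 y₂) : ℂ) = inner ℂ w (B y₂) := by
    rw [WithLp.prod_inner_apply]
    change inner ℂ (T (vec₂ x₁ 0)).fst (vec₂ 0 y₂).fst + inner ℂ (T (vec₂ x₁ 0)).snd (vec₂ 0 y₂).snd = _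
    have : ((vec₂ (0:H₀) y₂).fst : H₀) = 0 := rfl
    rw [this, inner_zero_right, zero_add, hT2]
    have hsnd : ((vec₂ (0:H₀) y₂).snd : H₀) = y₂ := rfl
    rw [hsnd]
    exact hBpos.1 w y₂
  rw [hinner]
  have hwle : ‖w‖ ≤ ‖B x₁‖ := by
    have h3 : ‖w‖ ≤ ‖T (vec₂ 0 (B x₁))‖ := by
      rw [← hw1]
      have := WithLp.prod_norm_sq_eq_of_L2 (T (vec₂ 0 (B x₁)))
      nlinarith [norm_nonneg (T (vec₂ 0 (B x₁))).fst, norm_nonneg (T (vec₂ 0 (B x₁))).snd,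
        norm_nonneg (T (vec₂ 0 (B x₁))), sq_nonneg ‖(T (vec₂ 0 (B x₁))).snd‖]
    have h4 : ‖T (vec₂ 0 (B x₁))‖ ≤ ‖vec₂ 0 (B x₁)‖ := by
      calc ‖T (vec₂ 0 (B x₁))‖ ≤ ‖T‖ * ‖vec₂ 0 (B x₁)‖ := T.le_opNorm _
        _ ≤ 1 * ‖vec₂ 0 (B x₁)‖ := by
            exact mul_le_mul_of_nonneg_right hT (norm_nonneg _)
        _ = ‖vec₂ 0 (B x₁)‖ := one_mul _
    have h5 : ‖vec₂ 0 (B x₁)‖ = ‖B x₁‖ := by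
      rw [WithLp.prod_norm_eq_of_L2]
      show Real.sqrt (‖(0:H₀)‖^2 + ‖B x₁‖^2) = _
      simp [Real.sqrt_sq (norm_nonneg _)]
    linarith
  calc ‖(inner ℂ w (B y₂) : ℂ)‖ ≤ ‖w‖ * ‖B y₂‖ := norm_inner_le_norm w (B y₂)
    _ ≤ ‖B x₁‖ * ‖B y₂‖ := mul_le_mul_of_nonneg_right hwle (norm_nonneg _)
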